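/- Let G be a connected finite simple graph with at least 2 vertices and let v be a vertex of G. Then v is an L-branch leaf of some GS ordering of G if and only if v is not a cut vertex of G. -/
import Mathlib


open SimpleGraph

variable {V : Type*}

/-- A generic search (GS) ordering: every vertex other than the first has an
earlier neighbor. -/
def IsGSOrdering [Fintype V] (G : SimpleGraph V) (σ : Fin (Fintype.card V) ≃ V) : Prop :=
  ∀ w : V, (σ.symm w).val ≠ 0 → ∃ u : V, σ.symm u < σ.symm w ∧ G.Adj u w

/-- DFS ordering (Corneil–Krueger four-point characterization). -/
def IsDFSOrdering [Fintype V] (G : SimpleGraph V) (σ : Fin (Fintype.card V) ≃ V) : Prop :=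
  IsGSOrdering G σ ∧ ∀ a b c : V, σ.symm a < σ.symm b → σ.symm b < σ.symm c →
    G.Adj a c → ¬ G.Adj a b →
      ∃ d : V, σ.symm a < σ.symm d ∧ σ.symm d < σ.symm b ∧ G.Adj d b

/-- BFS ordering (Corneil–Krueger four-point characterization). -/
def IsBFSOrdering [Fintype V] (G : SimpleGraph V) (σ : Fin (Fintype.card V) ≃ V) : Prop :=
  IsGSOrdering G σ ∧ ∀ a b c : V, σ.symm a < σ.symm b → σ.symm b < σ.symm c →
    G.Adj a c → ¬ G.Adj a b →
      ∃ d : V, σ.symm d < σ.symm a ∧ G.Adj d b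

/-- LDFS ordering (Corneil–Krueger four-point characterization). -/
def IsLDFSOrdering [Fintype V] (G : SimpleGraph V) (σ : Fin (Fintype.card V) ≃ V) : Prop :=
  IsGSOrdering G σ ∧ ∀ a b c : V, σ.symm a < σ.symm b → σ.symm b < σ.symm c →
    G.Adj a c → ¬ G.Adj a b →
      ∃ d : V, σ.symm a < σ.symm d ∧ σ.symm d < σ.symm b ∧ G.Adj d b ∧ ¬ G.Adj d c

/-- MNS ordering (Corneil–Krueger four-point characterization). -/
def IsMNSOrdering [Fintype V] (G : SimpleGraph V) (σ : Fin (Fintype.card V) ≃ V) : Prop :=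
  IsGSOrdering G σ ∧ ∀ a b c : V, σ.symm a < σ.symm b → σ.symm b < σ.symm c →
    G.Adj a c → ¬ G.Adj a b →
      ∃ d : V, σ.symm d < σ.symm b ∧ G.Adj d b ∧ ¬ G.Adj d c

/-- MCS ordering: for positions `i < j`, the vertex at position `i` has at least as many
neighbors among the vertices at positions `< i` as the vertex at position `j` has. -/
def IsMCSOrdering [Fintype V] (G : SimpleGraph V) (σ : Fin (Fintype.card V) ≃ V) : Prop :=
  ∀ i j : Fin (Fintype.card V), i < j →
    Nat.card {k : Fin (Fintype.card V) // k < i ∧ G.Adj (σ k) (σ j)} ≤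
    Nat.card {k : Fin (Fintype.card V) // k < i ∧ G.Adj (σ k) (σ i)}

/-- A perfect elimination ordering: the earlier neighbors of any vertex form a clique. -/
def IsPEO [Fintype V] (G : SimpleGraph V) (σ : Fin (Fintype.card V) ≃ V) : Prop :=
  ∀ u v w : V, σ.symm u < σ.symm w → σ.symm v < σ.symm w → u ≠ v →
    G.Adj u w → G.Adj v w → G.Adj u v

/-- `u` is the F-parent of `v`: `v` is not the first vertex and `u` is the earliest
neighbor of `v` in the ordering. -/
def FParent [Fintype V] (G : SimpleGraph V) (σ : Fin (Fintype.card V) ≃ V) (u v : V) : Prop :=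
  (σ.symm v).val ≠ 0 ∧ G.Adj u v ∧ ∀ w : V, G.Adj w v → σ.symm u ≤ σ.symm w

/-- `u` is the L-parent of `v`: `v` is not the first vertex and `u` is the last
neighbor of `v` occurring before `v` in the ordering. -/
def LParent [Fintype V] (G : SimpleGraph V) (σ : Fin (Fintype.card V) ≃ V) (u v : V) : Prop :=
  (σ.symm v).val ≠ 0 ∧ G.Adj u v ∧ σ.symm u < σ.symm v ∧
    ∀ w : V, G.Adj w v → σ.symm w < σ.symm v → σ.symm w ≤ σ.symm u

/-- `v` is an F-branch leaf: `v` is not the first vertex and is the F-parent of no vertex. -/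
def FBranchLeaf [Fintype V] (G : SimpleGraph V) (σ : Fin (Fintype.card V) ≃ V) (v : V) : Prop :=
  (σ.symm v).val ≠ 0 ∧ ∀ w : V, ¬ FParent G σ v w

/-- `v` is the F-root leaf: `v` is the first vertex and is the F-parent of exactly one vertex. -/
def FRootLeaf [Fintype V] (G : SimpleGraph V) (σ : Fin (Fintype.card V) ≃ V) (v : V) : Prop :=
  (σ.symm v).val = 0 ∧ ∃! w : V, FParent G σ v w

/-- `v` is an L-branch leaf: `v` is not the first vertex and is the L-parent of no vertex. -/
def LBranchLeaf [Fintype V] (G : SimpleGraph V) (σ : Fin (Fintype.card V) ≃ V) (v : V) : Prop :=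
  (σ.symm v).val ≠ 0 ∧ ∀ w : V, ¬ LParent G σ v w

/-- `v` is the L-root leaf: `v` is the first vertex and is the L-parent of exactly one vertex. -/
def LRootLeaf [Fintype V] (G : SimpleGraph V) (σ : Fin (Fintype.card V) ≃ V) (v : V) : Prop :=
  (σ.symm v).val = 0 ∧ ∃! w : V, LParent G σ v w

/-- `v` is an L-leaf: the L-root leaf or an L-branch leaf. -/
def LLeaf [Fintype V] (G : SimpleGraph V) (σ : Fin (Fintype.card V) ≃ V) (v : V) : Prop :=
  LRootLeaf G σ v ∨ LBranchLeaf G σ v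

/-- `v` is the end-vertex (last vertex) of the ordering `σ`. -/
def IsEndVertex [Fintype V] (σ : Fin (Fintype.card V) ≃ V) (v : V) : Prop :=
  (σ.symm v).val = Fintype.card V - 1

/-- `v` is a cut vertex: deleting `v` yields a disconnected graph. -/
def CutVertex (G : SimpleGraph V) (v : V) : Prop :=
  ¬ (G.induce {w : V | w ≠ v}).Connected

/-- A graph is chordal if every cycle of length at least 4 has a chord, i.e. an edge of the
graph joining two vertices of the cycle which is not an edge of the cycle. -/
def IsChordal (G : SimpleGraph V) : Prop :=
  ∀ ⦃v : V⦄ (w : G.Walk v v), w.IsCycle → 4 ≤ w.length →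
    ∃ x y : V, x ∈ w.support ∧ y ∈ w.support ∧ G.Adj x y ∧ s(x, y) ∉ w.edges

private lemma exists_adj_dist_lt {α : Type*} (H : SimpleGraph α) (hc : H.Connected)
    {a b : α} (hab : a ≠ b) : ∃ c, H.Adj c b ∧ H.dist a c < H.dist a b := by
  obtain ⟨p, hp⟩ := hc.exists_walk_length_eq_dist b a
  have hnil : ¬ p.Nil := SimpleGraph.Walk.not_nil_of_ne (Ne.symm hab)
  refine ⟨p.getVert 1, (p.adj_snd hnil).symm, ?_⟩
  have h1 : H.dist (p.getVert 1) a ≤ p.tail.length := SimpleGraph.dist_le p.tail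
  have h2 : p.tail.length + 1 = p.length := SimpleGraph.Walk.length_tail_add_one hnil
  have h3 : p.length = H.dist b a := hp
  have h4 : H.dist a b = H.dist b a := SimpleGraph.dist_comm
  have h5 : H.dist a (p.getVert 1) = H.dist (p.getVert 1) a := SimpleGraph.dist_comm
  have h6 : 0 < H.dist b a := hc.pos_dist_of_ne (Ne.symm hab)
  omega

/-- `v` is an L-branch leaf of some GS ordering iff `v` is not a cut vertex. -/
theorem stmt4 [Fintype V] (G : SimpleGraph V)
    (hG : G.Connected) (hn : 2 ≤ Fintype.card V) (v : V) :
    (∃ σ : Fin (Fintype.card V) ≃ V, IsGSOrdering G σ ∧ LBranchLeaf G σ v) ↔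
      ¬ CutVertex G v := by
  haveI : NeZero (Fintype.card V) := ⟨by omega⟩
  classical
  constructor
  · rintro ⟨σ, hGS, h0, hL⟩ hcut
    apply hcut
    rw [connected_iff]
    have hsv : σ 0 ≠ v := by
      intro h
      apply h0
      rw [← h, Equiv.symm_apply_apply]
      exact Fin.val_zero _
    have key : ∀ k : ℕ, ∀ w : V, ∀ hw : w ≠ v, (σ.symm w).val = k →
        (G.induce {w : V | w ≠ v}).Reachable ⟨σ 0, hsv⟩ ⟨w, hw⟩ := by
      intro k
      induction k using Nat.strong_induction_on with
      | _ k IH =>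
        intro w hw hk
        by_cases hws : w = σ 0
        · subst hws
          exact Reachable.refl _
        have hw0 : (σ.symm w).val ≠ 0 := by
          intro h
          apply hws
          have h1 : σ.symm w = 0 := Fin.ext (by simpa using h)
          rw [← h1, Equiv.apply_symm_apply]
        obtain ⟨u, hu, huw⟩ := hGS w hw0
        by_cases hall : ∀ x : V, G.Adj x w → σ.symm x < σ.symm w → x = v
        · exfalso
          apply hL w
          have huv : u = v := hall u huw hu
          subst huv
          refine ⟨hw0, huw, hu, fun x hx hxlt => le_of_eq (by rw [hall x hx hxlt])⟩
        · push_neg at hall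
          obtain ⟨x, hxw, hxlt, hxv⟩ := hall
          have hr := IH (σ.symm x).val (by omega) x hxv rfl
          refine hr.trans (SimpleGraph.Adj.reachable ?_)
          simpa using hxw
    refine ⟨fun a b => ?_, ⟨⟨σ 0, hsv⟩⟩⟩
    exact ((key _ a.1 a.2 rfl).symm.trans (key _ b.1 b.2 rfl))
  · intro hnc
    rw [CutVertex, not_not] at hnc
    obtain ⟨r0⟩ := hnc.nonempty
    set G' := G.induce {w : V | w ≠ v} with hG'
    set d : V → ℕ := fun w => if h : w ≠ v then G'.dist r0 ⟨w, h⟩ else 0 with hd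
    set M : ℕ := (Finset.univ.sup d) + 1 with hM
    set key : V → ℕ := fun w => if w = v then M else d w with hkey
    have hkeylt : ∀ w, w ≠ v → key w < M := by
      intro w hw
      simp only [hkey, if_neg hw]
      exact Nat.lt_succ_of_le (Finset.le_sup (Finset.mem_univ w))
    have hkeyd : ∀ w (hw : w ≠ v), key w = G'.dist r0 ⟨w, hw⟩ := by
      intro w hw
      simp only [hkey, if_neg hw, hd, dif_pos hw]
    have hkeyv : key v = M := by simp [hkey]
    set f : Fin (Fintype.card V) → ℕ := key ∘ (Fintype.equivFin V).symm with hf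
    set σ : Fin (Fintype.card V) ≃ V :=
      ((Tuple.sort f : Equiv.Perm (Fin (Fintype.card V))) : Fin (Fintype.card V) ≃ Fin (Fintype.card V)).trans
        (Fintype.equivFin V).symm with hσ
    have hmono : Monotone (fun i => key (σ i)) := Tuple.monotone_sort f
    have hlt : ∀ u w : V, key u < key w → σ.symm u < σ.symm w := by
      intro u w h
      by_contra hle
      push_neg at hle
      have h2 := hmono hle
      simp only [Equiv.apply_symm_apply] at h2
      omega
    have hvlast : (σ.symm v).val = Fintype.card V - 1 := by
      by_contra h
      set L : Fin (Fintype.card V) := ⟨Fintype.card V - 1, by omega⟩ with hLdef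
      have hle : σ.symm v ≤ L := by
        rw [Fin.le_def]
        have := (σ.symm v).isLt
        simp only [hLdef]
        omega
      have hne : σ L ≠ v := by
        intro he
        apply h
        rw [← he, Equiv.symm_apply_apply]
      have h1 := hmono hle
      simp only [Equiv.apply_symm_apply] at h1
      have h2 := hkeylt (σ L) hne
      omega
    have h0v : (σ.symm v).val ≠ 0 := by omega
    refine ⟨σ, ?_, h0v, ?_⟩
    · intro w hw
      by_cases hwv : w = v
      · subst hwv
        obtain ⟨x, hx⟩ := Fintype.exists_ne_of_one_lt_card (by omega) w
        obtain ⟨c, hcw, _⟩ := exists_adj_dist_lt G hG hx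
        have hcv : c ≠ w := hcw.ne
        exact ⟨c, hlt c w (by rw [hkeyv]; exact hkeylt c hcv), hcw⟩
      · by_cases hwr : w = (r0 : V)
        · exfalso
          apply hw
          have h1 : key (σ 0) ≤ key (σ (σ.symm w)) := hmono (Fin.zero_le _)
          simp only [Equiv.apply_symm_apply] at h1
          have h2 : key w = 0 := by
            rw [hkeyd w hwv]
            have : (⟨w, hwv⟩ : {x : V | x ≠ v}) = r0 := Subtype.ext hwr
            rw [this, SimpleGraph.dist_self]
          have h3 : σ 0 ≠ v := by
            intro he
            have := hkeyv
            rw [← he] at this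
            omega
          have h4 : key (σ 0) = 0 := by omega
          rw [hkeyd (σ 0) h3] at h4
          have h5 : (⟨σ 0, h3⟩ : {x : V | x ≠ v}) = r0 :=
            ((hnc.dist_eq_zero_iff).mp h4).symm
          have h6 : σ 0 = w := by rw [← Subtype.ext_iff.mp h5] at hwr; exact hwr.symm
          rw [← h6, Equiv.symm_apply_apply]
          exact Fin.val_zero _
        · have hab : r0 ≠ (⟨w, hwv⟩ : {x : V | x ≠ v}) := by
            intro he
            exact hwr (by rw [he])
          obtain ⟨c, hcadj, hclt⟩ := exists_adj_dist_lt G' hnc hab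
          have hcG : G.Adj (c : V) w := by
            have := hcadj
            rw [hG'] at this
            simpa using this
          refine ⟨(c : V), hlt _ _ ?_, hcG⟩
          rw [hkeyd _ c.2, hkeyd w hwv]
          convert hclt
    · intro w hLP
      obtain ⟨-, -, hlt', -⟩ := hLP
      have h1 : (σ.symm w).val < Fintype.card V := (σ.symm w).isLt
      have h2 : (σ.symm v).val < (σ.symm w).val := hlt'
      omega
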